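/- Let G and A be groups, ρ : G → Aut(A) a homomorphism (write g·x for ρ(g)(x)), and π : G → A a bijective 1-cocycle. Let J ∈ ℂ[A] ⊗ ℂ[A] be a twist for ℂ[A] which is G-invariant, i.e. (ρ(g) ⊗ ρ(g))(J) = J for all g ∈ G, where ρ(g) is extended ℂ-linearly to ℂ[A]. Then the element J̄ := (π⁻¹ ⊗ π⁻¹)(J), the image of J under the ℂ-linear map ℂ[A] ⊗ ℂ[A] → ℂ[G] ⊗ ℂ[G] sending the basis element a ⊗ a' to π⁻¹(a) ⊗ π⁻¹(a'), satisfies ((Δ ⊗ id)(J̄))·(J̄ ⊗ 1) = ((id ⊗ Δ)(J̄))·(1 ⊗ J̄) in ℂ[G] ⊗ ℂ[G] ⊗ ℂ[G] and (ε ⊗ id)(J̄) = (id ⊗ ε)(J̄) = 1. In particular, if J̄ is invertible then J̄ is a twist for ℂ[G]. -/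

import Mathlib

open TensorProduct

noncomputable section

variable (G : Type*) [Group G]

/-- Comultiplication on the group algebra `ℂ[G]`, determined by `Δ(g) = g ⊗ g`. -/
def GroupAlgebra.comul :
    MonoidAlgebra ℂ G →ₐ[ℂ] MonoidAlgebra ℂ G ⊗[ℂ] MonoidAlgebra ℂ G :=
  (MonoidAlgebra.lift ℂ _ G)
    { toFun := fun g => MonoidAlgebra.of ℂ G g ⊗ₜ[ℂ] MonoidAlgebra.of ℂ G g
      map_one' := by simp [Algebra.TensorProduct.one_def, MonoidAlgebra.one_def]
      map_mul' := fun g h => by simp [Algebra.TensorProduct.tmul_mul_tmul] }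

/-- Counit on the group algebra `ℂ[G]`, determined by `ε(g) = 1`. -/
def GroupAlgebra.counit : MonoidAlgebra ℂ G →ₐ[ℂ] ℂ :=
  (MonoidAlgebra.lift ℂ ℂ G) 1

/-- The equation `((Δ ⊗ id)(J))·(J ⊗ 1) = ((id ⊗ Δ)(J))·(1 ⊗ J)` in `ℂ[G] ⊗ ℂ[G] ⊗ ℂ[G]`. -/
def GroupAlgebra.TwistEq (J : MonoidAlgebra ℂ G ⊗[ℂ] MonoidAlgebra ℂ G) : Prop :=
  (Algebra.TensorProduct.assoc ℂ ℂ ℂ (MonoidAlgebra ℂ G) (MonoidAlgebra ℂ G) (MonoidAlgebra ℂ G))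
      ((Algebra.TensorProduct.map (GroupAlgebra.comul G) (AlgHom.id ℂ (MonoidAlgebra ℂ G))) J) *
    (Algebra.TensorProduct.assoc ℂ ℂ ℂ (MonoidAlgebra ℂ G) (MonoidAlgebra ℂ G) (MonoidAlgebra ℂ G))
      (J ⊗ₜ[ℂ] (1 : MonoidAlgebra ℂ G)) =
  (Algebra.TensorProduct.map (AlgHom.id ℂ (MonoidAlgebra ℂ G)) (GroupAlgebra.comul G)) J *
    ((1 : MonoidAlgebra ℂ G) ⊗ₜ[ℂ] J)

/-- The equations `(ε ⊗ id)(J) = 1` and `(id ⊗ ε)(J) = 1`. -/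
def GroupAlgebra.CounitEq (J : MonoidAlgebra ℂ G ⊗[ℂ] MonoidAlgebra ℂ G) : Prop :=
  (Algebra.TensorProduct.lid ℂ (MonoidAlgebra ℂ G))
      ((Algebra.TensorProduct.map (GroupAlgebra.counit G) (AlgHom.id ℂ (MonoidAlgebra ℂ G))) J) = 1 ∧
  (Algebra.TensorProduct.rid ℂ ℂ (MonoidAlgebra ℂ G))
      ((Algebra.TensorProduct.map (AlgHom.id ℂ (MonoidAlgebra ℂ G)) (GroupAlgebra.counit G)) J) = 1

/-- A twist for the group algebra `ℂ[G]`: an invertible element of `ℂ[G] ⊗ ℂ[G]` satisfying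
`((Δ ⊗ id)(J))·(J ⊗ 1) = ((id ⊗ Δ)(J))·(1 ⊗ J)` and `(ε ⊗ id)(J) = (id ⊗ ε)(J) = 1`. -/
def GroupAlgebra.IsTwist (J : MonoidAlgebra ℂ G ⊗[ℂ] MonoidAlgebra ℂ G) : Prop :=
  IsUnit J ∧ GroupAlgebra.TwistEq G J ∧ GroupAlgebra.CounitEq G J

end

/-- The `ℂ`-linear map `ℂ[A] → ℂ[G]` sending the basis element `a` to `p a`. -/
noncomputable def GroupAlgebra.transport (A G : Type*) [Group A] [Group G] (p : A → G) :
    MonoidAlgebra ℂ A →ₗ[ℂ] MonoidAlgebra ℂ G :=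
  MonoidAlgebra.mapDomainLinearMap ℂ ℂ p

section aux
variable {G A : Type*} [Group G] [Group A]

lemma GroupAlgebra.transport_single (p : A → G) (a : A) (c : ℂ) :
    GroupAlgebra.transport A G p (MonoidAlgebra.single a c) = MonoidAlgebra.single (p a) c :=
  MonoidAlgebra.mapDomainLinearMap_single _ _ _

lemma GroupAlgebra.comul_single (g : G) :
    GroupAlgebra.comul G (MonoidAlgebra.single g (1:ℂ))
      = MonoidAlgebra.single g 1 ⊗ₜ[ℂ] MonoidAlgebra.single g 1 := by
  have h : MonoidAlgebra.single g (1:ℂ) = MonoidAlgebra.of ℂ G g := rfl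
  rw [h, GroupAlgebra.comul]
  simp [MonoidAlgebra.lift_of]

lemma GroupAlgebra.counit_single (g : G) :
    GroupAlgebra.counit G (MonoidAlgebra.single g (1:ℂ)) = 1 := by
  have h : MonoidAlgebra.single g (1:ℂ) = MonoidAlgebra.of ℂ G g := rfl
  rw [h, GroupAlgebra.counit]
  simp [MonoidAlgebra.lift_of]

variable (ρ : G →* MulAut A) (π : G ≃ A)

lemma cocycle_symm (hπ : ∀ g g' : G, π (g * g') = π g * (ρ g) (π g'))
    (a a' : A) : π.symm a * π.symm a' = π.symm (a * ρ (π.symm a) a') := by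
  apply π.injective
  rw [hπ, π.apply_symm_apply, π.apply_symm_apply, π.apply_symm_apply]

lemma pi_symm_one (hπ : ∀ g g' : G, π (g * g') = π g * (ρ g) (π g')) :
    π.symm 1 = (1 : G) := by
  apply π.injective
  rw [π.apply_symm_apply]
  have h := hπ 1 1
  simp only [mul_one, map_one, MulAut.one_apply] at h
  exact (left_eq_mul.mp h).symm

lemma inner_left (hπ : ∀ g g' : G, π (g * g') = π g * (ρ g) (π g'))
    (a b : A) (y : MonoidAlgebra ℂ A ⊗[ℂ] MonoidAlgebra ℂ A) :
    (MonoidAlgebra.single (π.symm a) (1:ℂ) ⊗ₜ[ℂ]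
        (MonoidAlgebra.single (π.symm a) (1:ℂ) ⊗ₜ[ℂ] MonoidAlgebra.single (π.symm b) (1:ℂ))) *
      (Algebra.TensorProduct.assoc ℂ ℂ ℂ (MonoidAlgebra ℂ G) (MonoidAlgebra ℂ G) (MonoidAlgebra ℂ G))
        ((TensorProduct.map (GroupAlgebra.transport A G ⇑π.symm) (GroupAlgebra.transport A G ⇑π.symm) y)
          ⊗ₜ[ℂ] (1 : MonoidAlgebra ℂ G)) =
    (TensorProduct.map (GroupAlgebra.transport A G ⇑π.symm)
        (TensorProduct.map (GroupAlgebra.transport A G ⇑π.symm) (GroupAlgebra.transport A G ⇑π.symm)))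
      ((MonoidAlgebra.single a (1:ℂ) ⊗ₜ[ℂ] (MonoidAlgebra.single a (1:ℂ) ⊗ₜ[ℂ] MonoidAlgebra.single b (1:ℂ))) *
        (Algebra.TensorProduct.assoc ℂ ℂ ℂ (MonoidAlgebra ℂ A) (MonoidAlgebra ℂ A) (MonoidAlgebra ℂ A))
          ((TensorProduct.map (GroupAlgebra.transport A A ⇑(ρ (π.symm a))) (GroupAlgebra.transport A A ⇑(ρ (π.symm a))) y)
            ⊗ₜ[ℂ] (1 : MonoidAlgebra ℂ A))) := by
  set T := GroupAlgebra.transport A G ⇑π.symm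
  set Tg := GroupAlgebra.transport A A ⇑(ρ (π.symm a))
  let Φ : MonoidAlgebra ℂ A ⊗[ℂ] MonoidAlgebra ℂ A →ₗ[ℂ]
      MonoidAlgebra ℂ G ⊗[ℂ] (MonoidAlgebra ℂ G ⊗[ℂ] MonoidAlgebra ℂ G) :=
    (LinearMap.mulLeft ℂ (MonoidAlgebra.single (π.symm a) (1:ℂ) ⊗ₜ[ℂ]
        (MonoidAlgebra.single (π.symm a) (1:ℂ) ⊗ₜ[ℂ] MonoidAlgebra.single (π.symm b) (1:ℂ)))).comp
      (((Algebra.TensorProduct.assoc ℂ ℂ ℂ (MonoidAlgebra ℂ G) (MonoidAlgebra ℂ G) (MonoidAlgebra ℂ G)).toLinearMap).comp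
        (((TensorProduct.mk ℂ (MonoidAlgebra ℂ G ⊗[ℂ] MonoidAlgebra ℂ G) (MonoidAlgebra ℂ G)).flip 1).comp
          (TensorProduct.map T T)))
  let Ψ : MonoidAlgebra ℂ A ⊗[ℂ] MonoidAlgebra ℂ A →ₗ[ℂ]
      MonoidAlgebra ℂ G ⊗[ℂ] (MonoidAlgebra ℂ G ⊗[ℂ] MonoidAlgebra ℂ G) :=
    ((TensorProduct.map T (TensorProduct.map T T)).comp
      ((LinearMap.mulLeft ℂ (MonoidAlgebra.single a (1:ℂ) ⊗ₜ[ℂ]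
          (MonoidAlgebra.single a (1:ℂ) ⊗ₜ[ℂ] MonoidAlgebra.single b (1:ℂ)))).comp
        (((Algebra.TensorProduct.assoc ℂ ℂ ℂ (MonoidAlgebra ℂ A) (MonoidAlgebra ℂ A) (MonoidAlgebra ℂ A)).toLinearMap).comp
          (((TensorProduct.mk ℂ (MonoidAlgebra ℂ A ⊗[ℂ] MonoidAlgebra ℂ A) (MonoidAlgebra ℂ A)).flip 1).comp
            (TensorProduct.map Tg Tg)))))
  have h : Φ = Ψ := by
    ext a' b'
    simp only [Φ, Ψ, T, Tg, AlgebraTensorModule.curry_apply, TensorProduct.curry_apply,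
      LinearMap.coe_restrictScalars, MonoidAlgebra.lsingle_apply, LinearMap.comp_apply,
      TensorProduct.map_tmul, LinearMap.flip_apply,
      TensorProduct.mk_apply, AlgEquiv.toLinearMap_apply, LinearMap.mulLeft_apply,
      GroupAlgebra.transport_single, MonoidAlgebra.one_def, Algebra.TensorProduct.assoc_tmul,
      Algebra.TensorProduct.tmul_mul_tmul, MonoidAlgebra.single_mul_single, one_mul, mul_one]
    rw [cocycle_symm ρ π hπ, cocycle_symm ρ π hπ]
  exact DFunLike.congr_fun h y

lemma inner_right (hπ : ∀ g g' : G, π (g * g') = π g * (ρ g) (π g'))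
    (a b : A) (y : MonoidAlgebra ℂ A ⊗[ℂ] MonoidAlgebra ℂ A) :
    (MonoidAlgebra.single (π.symm a) (1:ℂ) ⊗ₜ[ℂ]
        (MonoidAlgebra.single (π.symm b) (1:ℂ) ⊗ₜ[ℂ] MonoidAlgebra.single (π.symm b) (1:ℂ))) *
      ((1 : MonoidAlgebra ℂ G) ⊗ₜ[ℂ]
        (TensorProduct.map (GroupAlgebra.transport A G ⇑π.symm) (GroupAlgebra.transport A G ⇑π.symm) y)) =
    (TensorProduct.map (GroupAlgebra.transport A G ⇑π.symm)
        (TensorProduct.map (GroupAlgebra.transport A G ⇑π.symm) (GroupAlgebra.transport A G ⇑π.symm)))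
      ((MonoidAlgebra.single a (1:ℂ) ⊗ₜ[ℂ] (MonoidAlgebra.single b (1:ℂ) ⊗ₜ[ℂ] MonoidAlgebra.single b (1:ℂ))) *
        ((1 : MonoidAlgebra ℂ A) ⊗ₜ[ℂ]
          (TensorProduct.map (GroupAlgebra.transport A A ⇑(ρ (π.symm b))) (GroupAlgebra.transport A A ⇑(ρ (π.symm b))) y))) := by
  set T := GroupAlgebra.transport A G ⇑π.symm
  set Tg := GroupAlgebra.transport A A ⇑(ρ (π.symm b))
  let Φ : MonoidAlgebra ℂ A ⊗[ℂ] MonoidAlgebra ℂ A →ₗ[ℂ]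
      MonoidAlgebra ℂ G ⊗[ℂ] (MonoidAlgebra ℂ G ⊗[ℂ] MonoidAlgebra ℂ G) :=
    (LinearMap.mulLeft ℂ (MonoidAlgebra.single (π.symm a) (1:ℂ) ⊗ₜ[ℂ]
        (MonoidAlgebra.single (π.symm b) (1:ℂ) ⊗ₜ[ℂ] MonoidAlgebra.single (π.symm b) (1:ℂ)))).comp
      (((TensorProduct.mk ℂ (MonoidAlgebra ℂ G) (MonoidAlgebra ℂ G ⊗[ℂ] MonoidAlgebra ℂ G)) 1).comp
        (TensorProduct.map T T))
  let Ψ : MonoidAlgebra ℂ A ⊗[ℂ] MonoidAlgebra ℂ A →ₗ[ℂ]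
      MonoidAlgebra ℂ G ⊗[ℂ] (MonoidAlgebra ℂ G ⊗[ℂ] MonoidAlgebra ℂ G) :=
    ((TensorProduct.map T (TensorProduct.map T T)).comp
      ((LinearMap.mulLeft ℂ (MonoidAlgebra.single a (1:ℂ) ⊗ₜ[ℂ]
          (MonoidAlgebra.single b (1:ℂ) ⊗ₜ[ℂ] MonoidAlgebra.single b (1:ℂ)))).comp
        (((TensorProduct.mk ℂ (MonoidAlgebra ℂ A) (MonoidAlgebra ℂ A ⊗[ℂ] MonoidAlgebra ℂ A)) 1).comp
          (TensorProduct.map Tg Tg))))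
  have h : Φ = Ψ := by
    ext a' b'
    simp only [Φ, Ψ, T, Tg, AlgebraTensorModule.curry_apply, TensorProduct.curry_apply,
      LinearMap.coe_restrictScalars, MonoidAlgebra.lsingle_apply, LinearMap.comp_apply,
      TensorProduct.map_tmul, TensorProduct.mk_apply, LinearMap.mulLeft_apply,
      GroupAlgebra.transport_single, MonoidAlgebra.one_def,
      Algebra.TensorProduct.tmul_mul_tmul, MonoidAlgebra.single_mul_single, one_mul, mul_one]
    rw [cocycle_symm ρ π hπ, cocycle_symm ρ π hπ]
  exact DFunLike.congr_fun h y

lemma key_left (hπ : ∀ g g' : G, π (g * g') = π g * (ρ g) (π g'))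
    (J : MonoidAlgebra ℂ A ⊗[ℂ] MonoidAlgebra ℂ A)
    (hGinv : ∀ g : G,
      TensorProduct.map (GroupAlgebra.transport A A ⇑(ρ g)) (GroupAlgebra.transport A A ⇑(ρ g)) J = J) :
    (Algebra.TensorProduct.assoc ℂ ℂ ℂ (MonoidAlgebra ℂ G) (MonoidAlgebra ℂ G) (MonoidAlgebra ℂ G))
        ((Algebra.TensorProduct.map (GroupAlgebra.comul G) (AlgHom.id ℂ (MonoidAlgebra ℂ G)))
          (TensorProduct.map (GroupAlgebra.transport A G ⇑π.symm) (GroupAlgebra.transport A G ⇑π.symm) J)) *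
      (Algebra.TensorProduct.assoc ℂ ℂ ℂ (MonoidAlgebra ℂ G) (MonoidAlgebra ℂ G) (MonoidAlgebra ℂ G))
        ((TensorProduct.map (GroupAlgebra.transport A G ⇑π.symm) (GroupAlgebra.transport A G ⇑π.symm) J)
          ⊗ₜ[ℂ] (1 : MonoidAlgebra ℂ G)) =
    (TensorProduct.map (GroupAlgebra.transport A G ⇑π.symm)
        (TensorProduct.map (GroupAlgebra.transport A G ⇑π.symm) (GroupAlgebra.transport A G ⇑π.symm)))
      ((Algebra.TensorProduct.assoc ℂ ℂ ℂ (MonoidAlgebra ℂ A) (MonoidAlgebra ℂ A) (MonoidAlgebra ℂ A))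
          ((Algebra.TensorProduct.map (GroupAlgebra.comul A) (AlgHom.id ℂ (MonoidAlgebra ℂ A))) J) *
        (Algebra.TensorProduct.assoc ℂ ℂ ℂ (MonoidAlgebra ℂ A) (MonoidAlgebra ℂ A) (MonoidAlgebra ℂ A))
          (J ⊗ₜ[ℂ] (1 : MonoidAlgebra ℂ A))) := by
  set T := GroupAlgebra.transport A G ⇑π.symm
  let Φ : MonoidAlgebra ℂ A ⊗[ℂ] MonoidAlgebra ℂ A →ₗ[ℂ]
      MonoidAlgebra ℂ G ⊗[ℂ] (MonoidAlgebra ℂ G ⊗[ℂ] MonoidAlgebra ℂ G) :=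
    (LinearMap.mulRight ℂ
        ((Algebra.TensorProduct.assoc ℂ ℂ ℂ (MonoidAlgebra ℂ G) (MonoidAlgebra ℂ G) (MonoidAlgebra ℂ G))
          ((TensorProduct.map T T J) ⊗ₜ[ℂ] (1 : MonoidAlgebra ℂ G)))).comp
      (((Algebra.TensorProduct.assoc ℂ ℂ ℂ (MonoidAlgebra ℂ G) (MonoidAlgebra ℂ G) (MonoidAlgebra ℂ G)).toLinearMap).comp
        (((Algebra.TensorProduct.map (GroupAlgebra.comul G) (AlgHom.id ℂ (MonoidAlgebra ℂ G))).toLinearMap).comp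
          (TensorProduct.map T T)))
  let Ψ : MonoidAlgebra ℂ A ⊗[ℂ] MonoidAlgebra ℂ A →ₗ[ℂ]
      MonoidAlgebra ℂ G ⊗[ℂ] (MonoidAlgebra ℂ G ⊗[ℂ] MonoidAlgebra ℂ G) :=
    ((TensorProduct.map T (TensorProduct.map T T)).comp
      ((LinearMap.mulRight ℂ
          ((Algebra.TensorProduct.assoc ℂ ℂ ℂ (MonoidAlgebra ℂ A) (MonoidAlgebra ℂ A) (MonoidAlgebra ℂ A))
            (J ⊗ₜ[ℂ] (1 : MonoidAlgebra ℂ A)))).comp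
        (((Algebra.TensorProduct.assoc ℂ ℂ ℂ (MonoidAlgebra ℂ A) (MonoidAlgebra ℂ A) (MonoidAlgebra ℂ A)).toLinearMap).comp
          ((Algebra.TensorProduct.map (GroupAlgebra.comul A) (AlgHom.id ℂ (MonoidAlgebra ℂ A))).toLinearMap))))
  have h : Φ = Ψ := by
    ext a b
    simp only [Φ, Ψ, T, AlgebraTensorModule.curry_apply, TensorProduct.curry_apply,
      LinearMap.coe_restrictScalars, MonoidAlgebra.lsingle_apply, LinearMap.comp_apply,
      TensorProduct.map_tmul, Algebra.TensorProduct.map_tmul, AlgHom.coe_id, id_eq,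
      AlgHom.toLinearMap_apply, AlgEquiv.toLinearMap_apply, LinearMap.mulRight_apply,
      GroupAlgebra.transport_single, GroupAlgebra.comul_single,
      Algebra.TensorProduct.assoc_tmul]
    conv_rhs => rw [← hGinv (π.symm a)]
    exact inner_left ρ π hπ a b J
  exact DFunLike.congr_fun h J

lemma key_right (hπ : ∀ g g' : G, π (g * g') = π g * (ρ g) (π g'))
    (J : MonoidAlgebra ℂ A ⊗[ℂ] MonoidAlgebra ℂ A)
    (hGinv : ∀ g : G,
      TensorProduct.map (GroupAlgebra.transport A A ⇑(ρ g)) (GroupAlgebra.transport A A ⇑(ρ g)) J = J) :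
    (Algebra.TensorProduct.map (AlgHom.id ℂ (MonoidAlgebra ℂ G)) (GroupAlgebra.comul G))
        (TensorProduct.map (GroupAlgebra.transport A G ⇑π.symm) (GroupAlgebra.transport A G ⇑π.symm) J) *
      ((1 : MonoidAlgebra ℂ G) ⊗ₜ[ℂ]
        (TensorProduct.map (GroupAlgebra.transport A G ⇑π.symm) (GroupAlgebra.transport A G ⇑π.symm) J)) =
    (TensorProduct.map (GroupAlgebra.transport A G ⇑π.symm)
        (TensorProduct.map (GroupAlgebra.transport A G ⇑π.symm) (GroupAlgebra.transport A G ⇑π.symm)))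
      ((Algebra.TensorProduct.map (AlgHom.id ℂ (MonoidAlgebra ℂ A)) (GroupAlgebra.comul A)) J *
        ((1 : MonoidAlgebra ℂ A) ⊗ₜ[ℂ] J)) := by
  set T := GroupAlgebra.transport A G ⇑π.symm
  let Φ : MonoidAlgebra ℂ A ⊗[ℂ] MonoidAlgebra ℂ A →ₗ[ℂ]
      MonoidAlgebra ℂ G ⊗[ℂ] (MonoidAlgebra ℂ G ⊗[ℂ] MonoidAlgebra ℂ G) :=
    (LinearMap.mulRight ℂ ((1 : MonoidAlgebra ℂ G) ⊗ₜ[ℂ] (TensorProduct.map T T J))).comp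
      (((Algebra.TensorProduct.map (AlgHom.id ℂ (MonoidAlgebra ℂ G)) (GroupAlgebra.comul G)).toLinearMap).comp
        (TensorProduct.map T T))
  let Ψ : MonoidAlgebra ℂ A ⊗[ℂ] MonoidAlgebra ℂ A →ₗ[ℂ]
      MonoidAlgebra ℂ G ⊗[ℂ] (MonoidAlgebra ℂ G ⊗[ℂ] MonoidAlgebra ℂ G) :=
    ((TensorProduct.map T (TensorProduct.map T T)).comp
      ((LinearMap.mulRight ℂ ((1 : MonoidAlgebra ℂ A) ⊗ₜ[ℂ] J)).comp
        ((Algebra.TensorProduct.map (AlgHom.id ℂ (MonoidAlgebra ℂ A)) (GroupAlgebra.comul A)).toLinearMap)))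
  have h : Φ = Ψ := by
    ext a b
    simp only [Φ, Ψ, T, AlgebraTensorModule.curry_apply, TensorProduct.curry_apply,
      LinearMap.coe_restrictScalars, MonoidAlgebra.lsingle_apply, LinearMap.comp_apply,
      TensorProduct.map_tmul, Algebra.TensorProduct.map_tmul, AlgHom.coe_id, id_eq,
      AlgHom.toLinearMap_apply, LinearMap.mulRight_apply,
      GroupAlgebra.transport_single, GroupAlgebra.comul_single]
    conv_rhs => rw [← hGinv (π.symm b)]
    exact inner_right ρ π hπ a b J
  exact DFunLike.congr_fun h J

lemma counit_left (J : MonoidAlgebra ℂ A ⊗[ℂ] MonoidAlgebra ℂ A) :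
    (Algebra.TensorProduct.lid ℂ (MonoidAlgebra ℂ G))
        ((Algebra.TensorProduct.map (GroupAlgebra.counit G) (AlgHom.id ℂ (MonoidAlgebra ℂ G)))
          (TensorProduct.map (GroupAlgebra.transport A G ⇑π.symm) (GroupAlgebra.transport A G ⇑π.symm) J)) =
    GroupAlgebra.transport A G ⇑π.symm
      ((Algebra.TensorProduct.lid ℂ (MonoidAlgebra ℂ A))
        ((Algebra.TensorProduct.map (GroupAlgebra.counit A) (AlgHom.id ℂ (MonoidAlgebra ℂ A))) J)) := by
  set T := GroupAlgebra.transport A G ⇑π.symm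
  let Φ : MonoidAlgebra ℂ A ⊗[ℂ] MonoidAlgebra ℂ A →ₗ[ℂ] MonoidAlgebra ℂ G :=
    ((Algebra.TensorProduct.lid ℂ (MonoidAlgebra ℂ G)).toLinearMap).comp
      (((Algebra.TensorProduct.map (GroupAlgebra.counit G) (AlgHom.id ℂ (MonoidAlgebra ℂ G))).toLinearMap).comp
        (TensorProduct.map T T))
  let Ψ : MonoidAlgebra ℂ A ⊗[ℂ] MonoidAlgebra ℂ A →ₗ[ℂ] MonoidAlgebra ℂ G :=
    (T.comp (((Algebra.TensorProduct.lid ℂ (MonoidAlgebra ℂ A)).toLinearMap).comp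
      ((Algebra.TensorProduct.map (GroupAlgebra.counit A) (AlgHom.id ℂ (MonoidAlgebra ℂ A))).toLinearMap)))
  have h : Φ = Ψ := by
    ext a b
    simp only [Φ, Ψ, T, AlgebraTensorModule.curry_apply, TensorProduct.curry_apply,
      LinearMap.coe_restrictScalars, MonoidAlgebra.lsingle_apply, LinearMap.comp_apply,
      TensorProduct.map_tmul, Algebra.TensorProduct.map_tmul, AlgHom.coe_id, id_eq,
      AlgHom.toLinearMap_apply, AlgEquiv.toLinearMap_apply,
      GroupAlgebra.transport_single, GroupAlgebra.counit_single,
      Algebra.TensorProduct.lid_tmul, one_smul]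
  exact DFunLike.congr_fun h J

lemma counit_right (J : MonoidAlgebra ℂ A ⊗[ℂ] MonoidAlgebra ℂ A) :
    (Algebra.TensorProduct.rid ℂ ℂ (MonoidAlgebra ℂ G))
        ((Algebra.TensorProduct.map (AlgHom.id ℂ (MonoidAlgebra ℂ G)) (GroupAlgebra.counit G))
          (TensorProduct.map (GroupAlgebra.transport A G ⇑π.symm) (GroupAlgebra.transport A G ⇑π.symm) J)) =
    GroupAlgebra.transport A G ⇑π.symm
      ((Algebra.TensorProduct.rid ℂ ℂ (MonoidAlgebra ℂ A))
        ((Algebra.TensorProduct.map (AlgHom.id ℂ (MonoidAlgebra ℂ A)) (GroupAlgebra.counit A)) J)) := by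
  set T := GroupAlgebra.transport A G ⇑π.symm
  let Φ : MonoidAlgebra ℂ A ⊗[ℂ] MonoidAlgebra ℂ A →ₗ[ℂ] MonoidAlgebra ℂ G :=
    ((Algebra.TensorProduct.rid ℂ ℂ (MonoidAlgebra ℂ G)).toLinearMap).comp
      (((Algebra.TensorProduct.map (AlgHom.id ℂ (MonoidAlgebra ℂ G)) (GroupAlgebra.counit G)).toLinearMap).comp
        (TensorProduct.map T T))
  let Ψ : MonoidAlgebra ℂ A ⊗[ℂ] MonoidAlgebra ℂ A →ₗ[ℂ] MonoidAlgebra ℂ G :=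
    (T.comp (((Algebra.TensorProduct.rid ℂ ℂ (MonoidAlgebra ℂ A)).toLinearMap).comp
      ((Algebra.TensorProduct.map (AlgHom.id ℂ (MonoidAlgebra ℂ A)) (GroupAlgebra.counit A)).toLinearMap)))
  have h : Φ = Ψ := by
    ext a b
    simp only [Φ, Ψ, T, AlgebraTensorModule.curry_apply, TensorProduct.curry_apply,
      LinearMap.coe_restrictScalars, MonoidAlgebra.lsingle_apply, LinearMap.comp_apply,
      TensorProduct.map_tmul, Algebra.TensorProduct.map_tmul, AlgHom.coe_id, id_eq,
      AlgHom.toLinearMap_apply, AlgEquiv.toLinearMap_apply,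
      GroupAlgebra.transport_single, GroupAlgebra.counit_single,
      Algebra.TensorProduct.rid_tmul, one_smul]
  exact DFunLike.congr_fun h J

end aux

/-- **Proposition 2.2.** Let `G, A` be groups, `ρ : G → Aut(A)` a homomorphism, `π : G → A` a
bijective 1-cocycle, and `J` a `G`-invariant twist for `ℂ[A]`.  Then
`J̄ := (π⁻¹ ⊗ π⁻¹)(J)` satisfies the twist equations
`((Δ ⊗ id)(J̄))·(J̄ ⊗ 1) = ((id ⊗ Δ)(J̄))·(1 ⊗ J̄)` and `(ε ⊗ id)(J̄) = (id ⊗ ε)(J̄) = 1`;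
in particular, if `J̄` is invertible then it is a twist for `ℂ[G]`. -/
theorem twist_transfer_along_bijective_one_cocycle
    (G A : Type*) [Group G] [Group A] (ρ : G →* MulAut A) (π : G ≃ A)
    (hπ : ∀ g g' : G, π (g * g') = π g * (ρ g) (π g'))
    (J : MonoidAlgebra ℂ A ⊗[ℂ] MonoidAlgebra ℂ A)
    (hJ : GroupAlgebra.IsTwist A J)
    (hGinv : ∀ g : G,
      TensorProduct.map (GroupAlgebra.transport A A ⇑(ρ g)) (GroupAlgebra.transport A A ⇑(ρ g)) J
        = J) :
    GroupAlgebra.TwistEq G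
        (TensorProduct.map (GroupAlgebra.transport A G ⇑π.symm)
          (GroupAlgebra.transport A G ⇑π.symm) J) ∧
    GroupAlgebra.CounitEq G
        (TensorProduct.map (GroupAlgebra.transport A G ⇑π.symm)
          (GroupAlgebra.transport A G ⇑π.symm) J) ∧
    (IsUnit (TensorProduct.map (GroupAlgebra.transport A G ⇑π.symm)
          (GroupAlgebra.transport A G ⇑π.symm) J) →
      GroupAlgebra.IsTwist G
        (TensorProduct.map (GroupAlgebra.transport A G ⇑π.symm)
          (GroupAlgebra.transport A G ⇑π.symm) J)) := by
  obtain ⟨hJu, hJtw, hJc1, hJc2⟩ := hJ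
  have htw : GroupAlgebra.TwistEq G
      (TensorProduct.map (GroupAlgebra.transport A G ⇑π.symm)
        (GroupAlgebra.transport A G ⇑π.symm) J) := by
    unfold GroupAlgebra.TwistEq
    rw [key_left ρ π hπ J hGinv, key_right ρ π hπ J hGinv]
    exact congrArg _ hJtw
  have hone : GroupAlgebra.transport A G ⇑π.symm (1 : MonoidAlgebra ℂ A)
      = (1 : MonoidAlgebra ℂ G) := by
    rw [MonoidAlgebra.one_def, MonoidAlgebra.one_def, GroupAlgebra.transport_single,
      pi_symm_one ρ π hπ]
  have hc : GroupAlgebra.CounitEq G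
      (TensorProduct.map (GroupAlgebra.transport A G ⇑π.symm)
        (GroupAlgebra.transport A G ⇑π.symm) J) := by
    constructor
    · rw [counit_left π J, hJc1, hone]
    · rw [counit_right π J, hJc2, hone]
  exact ⟨htw, hc, fun hu => ⟨hu, htw, hc⟩⟩
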